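/- Let E and F be real Hilbert spaces with E × F carrying the ℓ² product inner product, β > 0, σₓ, σᵤ ≥ 0, and let r : E × F → ℝ be nonnegative, convex, and β-smooth. Let f : E × F → E satisfy ‖f(x,u) − f(x',u)‖ ≤ σₓ·‖x − x'‖ and ‖f(x,u) − f(x,u')‖ ≤ σᵤ·‖u − u'‖ for all inputs. Let λ > λ₀ > 0, c > 1, and q, q' ≥ 0 satisfy c·σₓ²·q' + (1 + 1/λ₀)·(β/2) ≤ q. Suppose real numbers R, R† and points x, x† ∈ E, u, u† ∈ F satisfy R + q·‖x − x†‖² ≤ (1+λ)·R† and ‖u − u†‖² ≤ (λ − λ₀)·r(x†, u†) / ((1 + 1/λ₀)·(β/2) + (c/(c−1))·σᵤ²·q'). Then R + r(x, u) + q'·‖f(x, u) − f(x†, u†)‖² ≤ (1+λ)·(R† + r(x†, u†)). (Lemma D.1: a sufficient closeness condition to the prior action implies membership in the reservation-augmented safe set.) -/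

import Mathlib

open InnerProductSpace

/-- Descent lemma for β-smooth functions. -/
lemma descent_lemma {H : Type*} [NormedAddCommGroup H] [InnerProductSpace ℝ H]
    [CompleteSpace H] (r : H → ℝ) (g : H → H) (β : ℝ) (hβ : 0 ≤ β)
    (hgrad : ∀ z, HasGradientAt r (g z) z)
    (hglip : ∀ z w, ‖g z - g w‖ ≤ β * ‖z - w‖)
    (z w : H) :
    r z ≤ r w + ⟪g w, z - w⟫_ℝ + β / 2 * ‖z - w‖ ^ 2 := by
  set v := z - w with hv
  have hφ : ∀ t : ℝ, HasDerivAt (fun t : ℝ => r (w + t • v)) ⟪g (w + t • v), v⟫_ℝ t := by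
    intro t
    have h1 : HasDerivAt (fun t : ℝ => w + t • v) v t := by
      simpa using ((hasDerivAt_id t).smul_const v).const_add w
    have h2 : HasFDerivAt r (toDual ℝ H (g (w + t • v))) (w + t • v) := hgrad _
    have := h2.comp_hasDerivAt t h1
    simpa [InnerProductSpace.toDual_apply_apply, Function.comp_def] using this
  set ψ : ℝ → ℝ := fun t => r (w + t • v) - t * ⟪g w, v⟫_ℝ - β / 2 * ‖v‖ ^ 2 * t ^ 2
    with hψdef
  have hψ : ∀ t : ℝ, HasDerivAt ψ
      (⟪g (w + t • v), v⟫_ℝ - ⟪g w, v⟫_ℝ - β / 2 * ‖v‖ ^ 2 * (2 * t)) t := by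
    intro t
    have h3 : HasDerivAt (fun t : ℝ => t * ⟪g w, v⟫_ℝ) ⟪g w, v⟫_ℝ t := by
      simpa using (hasDerivAt_id t).mul_const ⟪g w, v⟫_ℝ
    have h4 : HasDerivAt (fun t : ℝ => β / 2 * ‖v‖ ^ 2 * t ^ 2)
        (β / 2 * ‖v‖ ^ 2 * (2 * t)) t := by
      have h5 := (hasDerivAt_pow 2 t).const_mul (β / 2 * ‖v‖ ^ 2)
      refine h5.congr_deriv ?_
      push_cast
      ring
    exact ((hφ t).sub h3).sub h4
  have hderiv : ∀ t : ℝ, deriv ψ t =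
      ⟪g (w + t • v), v⟫_ℝ - ⟪g w, v⟫_ℝ - β / 2 * ‖v‖ ^ 2 * (2 * t) :=
    fun t => (hψ t).deriv
  have hmono : AntitoneOn ψ (Set.Icc (0:ℝ) 1) := by
    apply antitoneOn_of_deriv_nonpos (convex_Icc 0 1)
    · exact fun t _ => ((hψ t).continuousAt).continuousWithinAt
    · exact fun t _ => ((hψ t).differentiableAt).differentiableWithinAt
    · intro t ht
      rw [interior_Icc] at ht
      rw [hderiv t]
      have hle : ⟪g (w + t • v) - g w, v⟫_ℝ ≤ β * t * ‖v‖ ^ 2 := by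
        calc ⟪g (w + t • v) - g w, v⟫_ℝ ≤ ‖g (w + t • v) - g w‖ * ‖v‖ :=
              real_inner_le_norm _ _
          _ ≤ (β * ‖(w + t • v) - w‖) * ‖v‖ :=
              mul_le_mul_of_nonneg_right (hglip _ _) (norm_nonneg _)
          _ = β * t * ‖v‖ ^ 2 := by
              rw [show (w + t • v) - w = t • v by abel, norm_smul]
              simp [Real.norm_eq_abs, abs_of_pos ht.1]; ring
      rw [inner_sub_left] at hle
      nlinarith [hle]
  have h01 := hmono (Set.left_mem_Icc.2 zero_le_one) (Set.right_mem_Icc.2 zero_le_one)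
    zero_le_one
  have e1 : ψ 1 = r z - ⟪g w, v⟫_ℝ - β / 2 * ‖v‖ ^ 2 := by
    simp [hψdef, hv]
  have e0 : ψ 0 = r w := by simp [hψdef]
  rw [e1, e0] at h01
  linarith

/-- Gradient norm bound for nonnegative β-smooth functions. -/
lemma grad_sq_le {H : Type*} [NormedAddCommGroup H] [InnerProductSpace ℝ H]
    [CompleteSpace H] (r : H → ℝ) (g : H → H) (β : ℝ) (hβ : 0 < β)
    (hr0 : ∀ z, 0 ≤ r z)
    (hgrad : ∀ z, HasGradientAt r (g z) z)
    (hglip : ∀ z w, ‖g z - g w‖ ≤ β * ‖z - w‖)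
    (w : H) : ‖g w‖ ^ 2 ≤ 2 * β * r w := by
  have h := descent_lemma r g β hβ.le hgrad hglip (w - β⁻¹ • g w) w
  have e1 : (w - β⁻¹ • g w) - w = -(β⁻¹ • g w) := by abel
  have e2 : ⟪g w, (w - β⁻¹ • g w) - w⟫_ℝ = -(β⁻¹ * ‖g w‖ ^ 2) := by
    rw [e1, inner_neg_right, real_inner_smul_right, real_inner_self_eq_norm_sq]
  have e3 : ‖(w - β⁻¹ • g w) - w‖ ^ 2 = β⁻¹ ^ 2 * ‖g w‖ ^ 2 := by
    rw [e1, norm_neg, norm_smul, Real.norm_eq_abs, abs_of_pos (inv_pos.2 hβ), mul_pow]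
  rw [e2, e3] at h
  have h0 := hr0 (w - β⁻¹ • g w)
  have e4 : β⁻¹ * ‖g w‖ ^ 2 - β / 2 * (β⁻¹ ^ 2 * ‖g w‖ ^ 2) = ‖g w‖ ^ 2 / (2 * β) := by
    field_simp
    ring
  have key : ‖g w‖ ^ 2 / (2 * β) ≤ r w := by linarith
  have h2β : (0:ℝ) < 2 * β := by positivity
  rw [div_le_iff₀ h2β] at key
  linarith

set_option maxHeartbeats 1000000 in
/-- Lemma D.1.
A sufficient closeness condition of the action `u` to the prior action `u†` implies
membership in the reservation-augmented safe set. -/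
theorem stmt9 {E F : Type*}
    [NormedAddCommGroup E] [InnerProductSpace ℝ E] [CompleteSpace E]
    [NormedAddCommGroup F] [InnerProductSpace ℝ F] [CompleteSpace F]
    (r : WithLp 2 (E × F) → ℝ) (g : WithLp 2 (E × F) → WithLp 2 (E × F))
    (f : E → F → E) (β σx σu lam lam₀ c q q' R Rdag : ℝ)
    (x xdag : E) (u udag : F)
    (hβ : 0 < β) (hσx : 0 ≤ σx) (hσu : 0 ≤ σu)
    (hr0 : ∀ z, 0 ≤ r z)
    (hconv : ConvexOn ℝ Set.univ r)
    (hgrad : ∀ z, HasGradientAt r (g z) z)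
    (hglip : ∀ z w, ‖g z - g w‖ ≤ β * ‖z - w‖)
    (hfx : ∀ (a a' : E) (b : F), ‖f a b - f a' b‖ ≤ σx * ‖a - a'‖)
    (hfu : ∀ (a : E) (b b' : F), ‖f a b - f a b'‖ ≤ σu * ‖b - b'‖)
    (hlam₀ : 0 < lam₀) (hlam : lam₀ < lam) (hc : 1 < c)
    (hq : 0 ≤ q) (hq' : 0 ≤ q')
    (hqq : c * σx ^ 2 * q' + (1 + 1 / lam₀) * (β / 2) ≤ q)
    (hinv : R + q * ‖x - xdag‖ ^ 2 ≤ (1 + lam) * Rdag)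
    (hu : ‖u - udag‖ ^ 2 ≤
      (lam - lam₀) * r ((WithLp.equiv 2 (E × F)).symm (xdag, udag)) /
        ((1 + 1 / lam₀) * (β / 2) + (c / (c - 1)) * σu ^ 2 * q')) :
    R + r ((WithLp.equiv 2 (E × F)).symm (x, u)) + q' * ‖f x u - f xdag udag‖ ^ 2
      ≤ (1 + lam) * (Rdag + r ((WithLp.equiv 2 (E × F)).symm (xdag, udag))) := by
  set z : WithLp 2 (E × F) := (WithLp.equiv 2 (E × F)).symm (x, u) with hz
  set zd : WithLp 2 (E × F) := (WithLp.equiv 2 (E × F)).symm (xdag, udag) with hzd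
  set a : ℝ := ‖x - xdag‖ with ha
  set b : ℝ := ‖u - udag‖ with hb
  have ha0 : 0 ≤ a := norm_nonneg _
  have hb0 : 0 ≤ b := norm_nonneg _
  -- norm of the difference in the product space
  have hnorm : ‖z - zd‖ ^ 2 = a ^ 2 + b ^ 2 := by
    have hsub : z - zd = (WithLp.equiv 2 (E × F)).symm (x - xdag, u - udag) := by
      rfl
    rw [hsub, WithLp.prod_norm_sq_eq_of_L2]
    rfl
  -- descent lemma and gradient bound
  have hdesc := descent_lemma r g β hβ.le hgrad hglip z zd
  have hgb := grad_sq_le r g β hβ hr0 hgrad hglip zd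
  set rd : ℝ := r zd with hrd
  have hrd0 : 0 ≤ rd := hr0 _
  set s : ℝ := ‖z - zd‖ with hs
  have hs0 : 0 ≤ s := norm_nonneg _
  -- inner product bound via Young's inequality
  have hinner : ⟪g zd, z - zd⟫_ℝ ≤ lam₀ * rd + β / (2 * lam₀) * s ^ 2 := by
    have h1 : ⟪g zd, z - zd⟫_ℝ ≤ ‖g zd‖ * s := real_inner_le_norm _ _
    have hG0 : 0 ≤ ‖g zd‖ := norm_nonneg _
    have h2 : 2 * β * lam₀ * (‖g zd‖ * s) ≤
        2 * β * lam₀ * (lam₀ * rd + β / (2 * lam₀) * s ^ 2) := by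
      have e : 2 * β * lam₀ * (lam₀ * rd + β / (2 * lam₀) * s ^ 2) =
          2 * β * lam₀ ^ 2 * rd + β ^ 2 * s ^ 2 := by
        field_simp
      rw [e]
      nlinarith [sq_nonneg (lam₀ * ‖g zd‖ - β * s),
        mul_nonneg (mul_nonneg hlam₀.le hlam₀.le) (sub_nonneg.2 hgb)]
    have h3 : ‖g zd‖ * s ≤ lam₀ * rd + β / (2 * lam₀) * s ^ 2 :=
      le_of_mul_le_mul_left h2 (by positivity)
    linarith
  -- smoothness bound on r z
  have hrz : r z ≤ (1 + lam₀) * rd + (1 + 1 / lam₀) * (β / 2) * (a ^ 2 + b ^ 2) := by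
    have h2 : r z ≤ rd + (lam₀ * rd + β / (2 * lam₀) * s ^ 2) + β / 2 * s ^ 2 := by
      linarith [hdesc]
    rw [hnorm] at h2
    have hco : (1 + 1 / lam₀) * (β / 2) = β / (2 * lam₀) + β / 2 := by
      field_simp; ring
    calc r z ≤ rd + (lam₀ * rd + β / (2 * lam₀) * (a ^ 2 + b ^ 2))
          + β / 2 * (a ^ 2 + b ^ 2) := h2
      _ = (1 + lam₀) * rd + (β / (2 * lam₀) + β / 2) * (a ^ 2 + b ^ 2) := by ring
      _ = (1 + lam₀) * rd + (1 + 1 / lam₀) * (β / 2) * (a ^ 2 + b ^ 2) := by rw [hco]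
  -- bound on the dynamics term
  have hfbound : ‖f x u - f xdag udag‖ ≤ σx * a + σu * b := by
    calc ‖f x u - f xdag udag‖ ≤ ‖f x u - f xdag u‖ + ‖f xdag u - f xdag udag‖ :=
          norm_sub_le_norm_sub_add_norm_sub _ _ _
      _ ≤ σx * a + σu * b := add_le_add (hfx x xdag u) (hfu xdag u udag)
  have hfsq : ‖f x u - f xdag udag‖ ^ 2 ≤
      c * σx ^ 2 * a ^ 2 + c / (c - 1) * σu ^ 2 * b ^ 2 := by
    have hc1 : 0 < c - 1 := by linarith
    have hF0 : 0 ≤ ‖f x u - f xdag udag‖ := norm_nonneg _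
    have h1 : ‖f x u - f xdag udag‖ ^ 2 ≤ (σx * a + σu * b) ^ 2 :=
      pow_le_pow_left₀ hF0 hfbound 2
    have h2 : (σx * a + σu * b) ^ 2 ≤ c * σx ^ 2 * a ^ 2 + c / (c - 1) * σu ^ 2 * b ^ 2 := by
      have key : 2 * (σx * a) * (σu * b) ≤ (c - 1) * (σx * a) ^ 2 + (σu * b) ^ 2 / (c - 1) := by
        have e : (c - 1) * (σx * a) ^ 2 + (σu * b) ^ 2 / (c - 1) - 2 * (σx * a) * (σu * b)
            = ((c - 1) * (σx * a) - σu * b) ^ 2 / (c - 1) := by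
          field_simp
          ring
        have h3 : 0 ≤ ((c - 1) * (σx * a) - σu * b) ^ 2 / (c - 1) := by positivity
        linarith [e ▸ h3]
      calc (σx * a + σu * b) ^ 2
          = (σx * a) ^ 2 + 2 * (σx * a) * (σu * b) + (σu * b) ^ 2 := by ring
        _ ≤ (σx * a) ^ 2 + ((c - 1) * (σx * a) ^ 2 + (σu * b) ^ 2 / (c - 1))
            + (σu * b) ^ 2 := by linarith [key]
        _ = c * σx ^ 2 * a ^ 2 + c / (c - 1) * σu ^ 2 * b ^ 2 := by
          field_simp
          ring
    linarith
  -- denominator positivity and the u-closeness bound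
  set D : ℝ := (1 + 1 / lam₀) * (β / 2) + (c / (c - 1)) * σu ^ 2 * q' with hD
  have hD0 : 0 < D := by
    have h1 : 0 < 1 / lam₀ := one_div_pos.mpr hlam₀
    have hc1 : (0:ℝ) < c - 1 := by linarith
    have h2 : 0 ≤ c / (c - 1) * σu ^ 2 * q' := by positivity
    have h3 : 0 < (1 + 1 / lam₀) * (β / 2) := by
      apply mul_pos <;> linarith
    rw [hD]
    linarith
  have huB : D * b ^ 2 ≤ (lam - lam₀) * rd := by
    have := hu
    rw [le_div_iff₀ hD0] at this
    linarith [this]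
  -- combine everything
  have hA : (c * σx ^ 2 * q' + (1 + 1 / lam₀) * (β / 2)) * a ^ 2 ≤ q * a ^ 2 :=
    mul_le_mul_of_nonneg_right hqq (by positivity)
  have hq'f : q' * ‖f x u - f xdag udag‖ ^ 2 ≤
      q' * (c * σx ^ 2 * a ^ 2 + c / (c - 1) * σu ^ 2 * b ^ 2) :=
    mul_le_mul_of_nonneg_left hfsq hq'
  have hq'f2 : q' * ‖f x u - f xdag udag‖ ^ 2 ≤
      c * σx ^ 2 * q' * a ^ 2 + c / (c - 1) * σu ^ 2 * q' * b ^ 2 := by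
    calc q' * ‖f x u - f xdag udag‖ ^ 2
        ≤ q' * (c * σx ^ 2 * a ^ 2 + c / (c - 1) * σu ^ 2 * b ^ 2) := hq'f
      _ = c * σx ^ 2 * q' * a ^ 2 + c / (c - 1) * σu ^ 2 * q' * b ^ 2 := by ring
  have hDB : (1 + 1 / lam₀) * (β / 2) * b ^ 2 + c / (c - 1) * σu ^ 2 * q' * b ^ 2
      ≤ (lam - lam₀) * rd := by
    calc (1 + 1 / lam₀) * (β / 2) * b ^ 2 + c / (c - 1) * σu ^ 2 * q' * b ^ 2
        = D * b ^ 2 := by rw [hD]; ring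
      _ ≤ (lam - lam₀) * rd := huB
  have hA' : c * σx ^ 2 * q' * a ^ 2 + (1 + 1 / lam₀) * (β / 2) * a ^ 2 ≤ q * a ^ 2 := by
    calc c * σx ^ 2 * q' * a ^ 2 + (1 + 1 / lam₀) * (β / 2) * a ^ 2
        = (c * σx ^ 2 * q' + (1 + 1 / lam₀) * (β / 2)) * a ^ 2 := by ring
      _ ≤ q * a ^ 2 := hA
  have hrz' : r z ≤ (1 + lam₀) * rd + (1 + 1 / lam₀) * (β / 2) * a ^ 2
      + (1 + 1 / lam₀) * (β / 2) * b ^ 2 := by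
    calc r z ≤ (1 + lam₀) * rd + (1 + 1 / lam₀) * (β / 2) * (a ^ 2 + b ^ 2) := hrz
      _ = (1 + lam₀) * rd + (1 + 1 / lam₀) * (β / 2) * a ^ 2
          + (1 + 1 / lam₀) * (β / 2) * b ^ 2 := by ring
  have hfinal : (1 + lam) * Rdag + (1 + lam) * rd = (1 + lam) * (Rdag + rd) := by ring
  linarith [hrz', hq'f2, hDB, hA', hinv]
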